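/- Fix p ∈ (0,1), q = 1-p. For k = (k₀,...,k_{l-1}) with 0 ≤ k₀ < k₁ < ... < k_{l-1} and z_i = p·w_i + q for each i, the weighted monomial identity holds: p^l · z₀^{k₀} z₁^{k₁-k₀-1} ··· z_{l-1}^{k_{l-1}-k_{l-2}-1} = Σ_{0 ≤ j₀ < j₁ < ... < j_{l-1}} binom(k₀, j₀) · Π_{h=1}^{l-1} binom(k_h - k_{h-1} - 1, j_h - j_{h-1} - 1) · p^{j_{l-1}+1} q^{k_{l-1} - j_{l-1}} · w₀^{j₀} w₁^{j₁-j₀-1} ··· w_{l-1}^{j_{l-1}-j_{l-2}-1}. -/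

import Mathlib

open Finset


/-- The weighted monomial identity underlying the `W`-generating identity for the deletion
channel: for `0 ≤ k₀ < k₁ < ⋯ < k_{l-1}` and `z_i = p·w_i + q` with `q = 1-p`,
`p^l·z^{⊙k} = Σ_{0 ≤ j₀ < ⋯ < j_{l-1} ≤ k_{l-1}} binom(k₀,j₀)·Π_h binom(k_h-k_{h-1}-1, j_h-j_{h-1}-1)
· p^{j_{l-1}+1} q^{k_{l-1}-j_{l-1}} · w^{⊙j}`. -/
theorem stmt_17 (p : ℝ) (hp0 : 0 < p) (hp1 : p < 1) (l' : ℕ) (k : Fin (l' + 1) → ℕ)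
    (hk : StrictMono k) (w z : Fin (l' + 1) → ℂ)
    (hz : ∀ i, z i = (p : ℂ) * w i + ((1 - p : ℝ) : ℂ)) :
    (p : ℂ) ^ (l' + 1) *
        (z 0 ^ k 0 * ∏ h : Fin l', z h.succ ^ (k h.succ - k h.castSucc - 1)) =
      ∑ j ∈ Finset.univ.filter
          (fun j : Fin (l' + 1) → Fin (k (Fin.last l') + 1) =>
            ∀ a b : Fin (l' + 1), a < b → (j a : ℕ) < (j b : ℕ)),
        (((k 0).choose (j 0 : ℕ) : ℂ) *
            ∏ h : Fin l',
              (((k h.succ - k h.castSucc - 1).choose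
                ((j h.succ : ℕ) - (j h.castSucc : ℕ) - 1) : ℕ) : ℂ)) *
          (p : ℂ) ^ ((j (Fin.last l') : ℕ) + 1) *
          ((1 - p : ℝ) : ℂ) ^ (k (Fin.last l') - (j (Fin.last l') : ℕ)) *
          (w 0 ^ (j 0 : ℕ) *
            ∏ h : Fin l', w h.succ ^ ((j h.succ : ℕ) - (j h.castSucc : ℕ) - 1)) := by
  classical
  set q : ℂ := ((1 - p : ℝ) : ℂ) with hqdef
  set E : Fin (l' + 1) → ℕ :=
    fun i => Fin.cases (k 0) (fun h => k h.succ - k h.castSucc - 1) i with hEdef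
  have hE0 : E 0 = k 0 := rfl
  have hEs : ∀ h : Fin l', E h.succ = k h.succ - k h.castSucc - 1 := by
    intro h; simp [hEdef]
  set Eext : ℕ → ℕ := fun t => if h : t < l' + 1 then E ⟨t, h⟩ else 0 with hEext
  set Mext : (Fin (l' + 1) → ℕ) → ℕ → ℕ :=
    fun m t => if h : t < l' + 1 then m ⟨t, h⟩ else 0 with hMext
  have hMextFin : ∀ (m : Fin (l' + 1) → ℕ) (i : Fin (l' + 1)), Mext m (i : ℕ) = m i := by
    intro m i; simp [hMext, i.isLt, i.is_le]
  have hEextFin : ∀ i : Fin (l' + 1), Eext (i : ℕ) = E i := by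
    intro i; simp [hEext, i.isLt, i.is_le]
  have hLk : ∀ i : Fin (l' + 1), (∑ t ∈ range ((i : ℕ) + 1), Eext t) + (i : ℕ) = k i := by
    intro i
    induction i using Fin.induction with
    | zero => simpa [hE0] using hEextFin 0
    | succ h ih =>
      have hki : k h.castSucc < k h.succ := hk (Fin.castSucc_lt_succ (i := h))
      have h1 : ((h.succ : Fin (l' + 1)) : ℕ) = (h : ℕ) + 1 := rfl
      have h2 : ((h.castSucc : Fin (l' + 1)) : ℕ) = (h : ℕ) := rfl
      rw [h1, sum_range_succ]
      have h3 : Eext ((h : ℕ) + 1) = k h.succ - k h.castSucc - 1 := by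
        rw [← h1, hEextFin h.succ, hEs]
      rw [h2] at ih
      omega
  set Jval : (Fin (l' + 1) → ℕ) → Fin (l' + 1) → ℕ :=
    fun m i => (∑ t ∈ range ((i : ℕ) + 1), Mext m t) + (i : ℕ) with hJval
  set toJ : (Fin (l' + 1) → ℕ) → Fin (l' + 1) → Fin (k (Fin.last l') + 1) :=
    fun m i => ⟨min (Jval m i) (k (Fin.last l')), by omega⟩ with htoJ
  set toM : (Fin (l' + 1) → Fin (k (Fin.last l') + 1)) → Fin (l' + 1) → ℕ :=
    fun j i => Fin.cases (motive := fun _ => ℕ) (j 0 : ℕ)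
      (fun h => (j h.succ : ℕ) - (j h.castSucc : ℕ) - 1) i with htoM
  have htoM0 : ∀ j, toM j 0 = (j 0 : ℕ) := fun j => rfl
  have htoMs : ∀ j (h : Fin l'), toM j h.succ = (j h.succ : ℕ) - (j h.castSucc : ℕ) - 1 := by
    intro j h; simp [htoM]
  set S : Finset (Fin (l' + 1) → ℕ) :=
    Fintype.piFinset (fun i => range (E i + 1)) with hS
  have hmemS : ∀ m, m ∈ S ↔ ∀ i, m i ≤ E i := by
    intro m
    simp [hS, Fintype.mem_piFinset, Nat.lt_succ_iff]
  have hJle : ∀ m, (∀ i, m i ≤ E i) → ∀ i : Fin (l' + 1), Jval m i ≤ k i := by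
    intro m hm i
    have h1 : ∑ t ∈ range ((i : ℕ) + 1), Mext m t ≤ ∑ t ∈ range ((i : ℕ) + 1), Eext t := by
      apply Finset.sum_le_sum
      intro t _
      by_cases ht : t < l' + 1
      · simpa [hMext, hEext, ht, show t ≤ l' by omega] using hm ⟨t, ht⟩
      · simp [hMext, hEext, ht, show ¬ t ≤ l' by omega]
    have := hLk i
    simp only [hJval]
    omega
  have hklast : ∀ i : Fin (l' + 1), k i ≤ k (Fin.last l') := fun i =>
    hk.monotone (Fin.le_last i)
  have hJeq : ∀ m, (∀ i, m i ≤ E i) → ∀ i, ((toJ m i : ℕ)) = Jval m i := by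
    intro m hm i
    have := hJle m hm i
    have := hklast i
    simp only [htoJ]
    omega
  have hJ0 : ∀ m, Jval m 0 = m 0 := by
    intro m
    have h0 : ((0 : Fin (l' + 1)) : ℕ) = 0 := rfl
    simp only [hJval, h0, Finset.sum_range_one]
    simpa using hMextFin m 0
  have hJsucc : ∀ m (h : Fin l'), Jval m h.succ = Jval m h.castSucc + m h.succ + 1 := by
    intro m h
    have h1 : ((h.succ : Fin (l' + 1)) : ℕ) = (h : ℕ) + 1 := rfl
    have h2 : ((h.castSucc : Fin (l' + 1)) : ℕ) = (h : ℕ) := rfl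
    have h3 : Mext m ((h : ℕ) + 1) = m h.succ := by
      rw [← h1, hMextFin]
    simp only [hJval, h1, h2, sum_range_succ, h3]
    ring
  have hJlast : ∀ m, Jval m (Fin.last l') = (∑ i : Fin (l' + 1), m i) + l' := by
    intro m
    have h1 : ((Fin.last l' : Fin (l' + 1)) : ℕ) = l' := rfl
    have h2 : ∑ i : Fin (l' + 1), m i = ∑ t ∈ range (l' + 1), Mext m t := by
      rw [← Fin.sum_univ_eq_sum_range (fun t => Mext m t) (l' + 1)]
      exact Finset.sum_congr rfl (fun i _ => (hMextFin m i).symm)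
    simp only [hJval, h1, h2]
  have hJmono : ∀ m, StrictMono (Jval m) := by
    intro m a b hab
    have h1 : ∑ t ∈ range ((a : ℕ) + 1), Mext m t ≤ ∑ t ∈ range ((b : ℕ) + 1), Mext m t := by
      apply Finset.sum_le_sum_of_subset
      apply Finset.range_subset_range.mpr
      have : (a : ℕ) < (b : ℕ) := hab
      omega
    have : (a : ℕ) < (b : ℕ) := hab
    simp only [hJval]
    omega
  have hSE : (∑ i : Fin (l' + 1), E i) + l' = k (Fin.last l') := by
    have h1 : ∑ i : Fin (l' + 1), E i = ∑ t ∈ range (l' + 1), Eext t := by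
      rw [← Fin.sum_univ_eq_sum_range (fun t => Eext t) (l' + 1)]
      exact Finset.sum_congr rfl (fun i _ => (hEextFin i).symm)
    have := hLk (Fin.last l')
    simp only [Fin.val_last] at this
    omega
  -- Step 1 : expand the left-hand side
  have key1 : (p : ℂ) ^ (l' + 1) *
      (z 0 ^ k 0 * ∏ h : Fin l', z h.succ ^ (k h.succ - k h.castSucc - 1)) =
      ∑ m ∈ S, (p : ℂ) ^ (l' + 1) *
        ∏ i : Fin (l' + 1),
          (((p : ℂ) * w i) ^ (m i) * q ^ (E i - m i) * ((E i).choose (m i) : ℂ)) := by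
    rw [← Finset.mul_sum]
    congr 1
    have h1 : z 0 ^ k 0 * ∏ h : Fin l', z h.succ ^ (k h.succ - k h.castSucc - 1)
        = ∏ i : Fin (l' + 1), z i ^ E i := by
      rw [Fin.prod_univ_succ]
      have h2 : ∀ h : Fin l', z h.succ ^ E h.succ
          = z h.succ ^ (k h.succ - k h.castSucc - 1) := fun h => by rw [hEs]
      rw [hE0, Finset.prod_congr rfl (fun h _ => h2 h)]
    rw [h1]
    calc ∏ i : Fin (l' + 1), z i ^ E i
        = ∏ i : Fin (l' + 1), ∑ mi ∈ range (E i + 1),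
            ((p : ℂ) * w i) ^ mi * q ^ (E i - mi) * ((E i).choose mi : ℂ) := by
          refine Finset.prod_congr rfl (fun i _ => ?_)
          rw [hz i]
          exact add_pow _ _ _
      _ = _ := Finset.prod_univ_sum _ _
  rw [key1]
  -- Step 2 : restrict the right-hand side to the support
  set G : (Fin (l' + 1) → Fin (k (Fin.last l') + 1)) → ℂ := fun j =>
    (((k 0).choose (j 0 : ℕ) : ℂ) *
        ∏ h : Fin l',
          (((k h.succ - k h.castSucc - 1).choose
            ((j h.succ : ℕ) - (j h.castSucc : ℕ) - 1) : ℕ) : ℂ)) *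
      (p : ℂ) ^ ((j (Fin.last l') : ℕ) + 1) *
      q ^ (k (Fin.last l') - (j (Fin.last l') : ℕ)) *
      (w 0 ^ (j 0 : ℕ) *
        ∏ h : Fin l', w h.succ ^ ((j h.succ : ℕ) - (j h.castSucc : ℕ) - 1)) with hG
  set P : (Fin (l' + 1) → Fin (k (Fin.last l') + 1)) → Prop :=
    fun j => ∀ a b : Fin (l' + 1), a < b → (j a : ℕ) < (j b : ℕ) with hP
  set B : (Fin (l' + 1) → Fin (k (Fin.last l') + 1)) → Prop :=
    fun j => (j 0 : ℕ) ≤ k 0 ∧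
      ∀ h : Fin l', (j h.succ : ℕ) - (j h.castSucc : ℕ) - 1 ≤ k h.succ - k h.castSucc - 1
      with hB
  have hrestrict : ∑ j ∈ Finset.univ.filter P, G j
      = ∑ j ∈ Finset.univ.filter (fun j => P j ∧ B j), G j := by
    refine (Finset.sum_subset ?_ ?_).symm
    · intro j hj
      simp only [mem_filter, mem_univ, true_and] at hj ⊢
      exact hj.1
    · intro j hj hj'
      simp only [mem_filter, mem_univ, true_and] at hj hj'
      have hnB : ¬ B j := fun h => hj' ⟨hj, h⟩
      simp only [hB, not_and_or, not_forall, not_le] at hnB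
      rcases hnB with h1 | ⟨h, h2⟩
      · have : (k 0).choose (j 0 : ℕ) = 0 := Nat.choose_eq_zero_of_lt h1
        simp [hG, this]
      · have : ∏ hh : Fin l',
            (((k hh.succ - k hh.castSucc - 1).choose
              ((j hh.succ : ℕ) - (j hh.castSucc : ℕ) - 1) : ℕ) : ℂ) = 0 := by
          refine Finset.prod_eq_zero (mem_univ h) ?_
          rw [Nat.choose_eq_zero_of_lt (by omega)]
          simp
        simp [hG, this]
  rw [hrestrict]
  -- Step 3 : the bijection
  refine Finset.sum_nbij' toJ toM ?_ ?_ ?_ ?_ ?_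
  · -- toJ maps S into the filtered set
    intro m hmS
    have hm : ∀ i, m i ≤ E i := (hmemS m).1 hmS
    simp only [mem_filter, mem_univ, true_and]
    constructor
    · intro a b hab
      rw [hJeq m hm a, hJeq m hm b]
      exact hJmono m hab
    · constructor
      · rw [hJeq m hm 0, hJ0]
        exact hm 0
      · intro h
        rw [hJeq m hm h.succ, hJeq m hm h.castSucc, hJsucc]
        have := hm h.succ
        rw [hEs] at this
        omega
  · -- toM maps the filtered set into S
    intro j hj
    simp only [mem_filter, mem_univ, true_and] at hj
    rw [hmemS]
    intro i
    induction i using Fin.cases with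
    | zero => rw [htoM0, hE0]; exact hj.2.1
    | succ h => rw [htoMs, hEs]; exact hj.2.2 h
  · -- left inverse
    intro m hmS
    have hm : ∀ i, m i ≤ E i := (hmemS m).1 hmS
    funext i
    induction i using Fin.cases with
    | zero => rw [htoM0, hJeq m hm 0, hJ0]
    | succ h =>
      rw [htoMs, hJeq m hm h.succ, hJeq m hm h.castSucc, hJsucc]
      omega
  · -- right inverse
    intro j hj
    simp only [mem_filter, mem_univ, true_and] at hj
    have hmj : ∀ i, toM j i ≤ E i := by
      intro i
      induction i using Fin.cases with
      | zero => rw [htoM0, hE0]; exact hj.2.1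
      | succ h => rw [htoMs, hEs]; exact hj.2.2 h
    funext i
    apply Fin.ext
    rw [hJeq _ hmj i]
    induction i using Fin.induction with
    | zero => rw [hJ0, htoM0]
    | succ h ih =>
      have hlt : (j h.castSucc : ℕ) < (j h.succ : ℕ) := hj.1 _ _ (Fin.castSucc_lt_succ (i := h))
      rw [hJsucc, ih, htoMs]
      omega
  · -- term equality
    intro m hmS
    have hm : ∀ i, m i ≤ E i := (hmemS m).1 hmS
    have e0 : (toJ m 0 : ℕ) = m 0 := by rw [hJeq m hm 0, hJ0]
    have ed : ∀ h : Fin l',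
        (toJ m h.succ : ℕ) - (toJ m h.castSucc : ℕ) - 1 = m h.succ := by
      intro h
      rw [hJeq m hm h.succ, hJeq m hm h.castSucc, hJsucc]
      omega
    have el : (toJ m (Fin.last l') : ℕ) = (∑ i : Fin (l' + 1), m i) + l' := by
      rw [hJeq m hm (Fin.last l'), hJlast]
    have e0' : Jval m 0 ⊓ k (Fin.last l') = m 0 := by
      rw [min_eq_left (le_trans (hJle m hm 0) (hklast 0)), hJ0]
    have el' : Jval m (Fin.last l') ⊓ k (Fin.last l') = (∑ i : Fin (l' + 1), m i) + l' := by
      rw [min_eq_left (le_trans (hJle m hm (Fin.last l')) (hklast (Fin.last l'))), hJlast]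
    rw [hG]
    simp only [e0, el, ed, e0', el']
    -- now transform the left product
    have hsplit : ∏ i : Fin (l' + 1),
        (((p : ℂ) * w i) ^ (m i) * q ^ (E i - m i) * ((E i).choose (m i) : ℂ))
        = ((p : ℂ) ^ (∑ i : Fin (l' + 1), m i)) *
          (w 0 ^ (m 0) * ∏ h : Fin l', w h.succ ^ (m h.succ)) *
          q ^ (k (Fin.last l') - ((∑ i : Fin (l' + 1), m i) + l')) *
          (((k 0).choose (m 0) : ℂ) *
            ∏ h : Fin l', ((E h.succ).choose (m h.succ) : ℂ)) := by
      rw [Finset.prod_mul_distrib, Finset.prod_mul_distrib]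
      congr 1
      · congr 1
        · have : ∀ i : Fin (l' + 1), ((p : ℂ) * w i) ^ (m i)
              = (p : ℂ) ^ (m i) * w i ^ (m i) := fun i => mul_pow _ _ _
          rw [Finset.prod_congr rfl (fun i _ => this i), Finset.prod_mul_distrib]
          congr 1
          · exact Finset.prod_pow_eq_pow_sum _ _ _
          · rw [Fin.prod_univ_succ]
        · rw [Finset.prod_pow_eq_pow_sum]
          congr 1
          have h1 : ∑ i : Fin (l' + 1), (E i - m i)
              = (∑ i : Fin (l' + 1), E i) - (∑ i : Fin (l' + 1), m i) :=
            Finset.sum_tsub_distrib _ (fun i _ => hm i)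
          have h2 : (∑ i : Fin (l' + 1), m i) ≤ ∑ i : Fin (l' + 1), E i :=
            Finset.sum_le_sum (fun i _ => hm i)
          omega
      · rw [Fin.prod_univ_succ, hE0]
    rw [hsplit]
    have hEchoose : ∀ h : Fin l', ((E h.succ).choose (m h.succ) : ℂ)
        = (((k h.succ - k h.castSucc - 1).choose (m h.succ) : ℕ) : ℂ) := by
      intro h; rw [hEs]
    rw [Finset.prod_congr rfl (fun h _ => hEchoose h)]
    rw [pow_add, pow_add]
    ring
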